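/- For every μ ∈ ℝ^m and every x ∈ X, the positive parts of the affine transform of the feature mapping with offset φ(μ,x) sum exactly to one over the labels: ∑_{y ∈ Y} max(Φ(x,y)ᵀμ − φ(μ,x), 0) = 1. -/

import Mathlib

open MeasureTheory

noncomputable section

/-- `φ(μ,x) = max_{∅ ≠ C ⊆ Y} ((∑_{y∈C} Φ(x,y)ᵀμ) - 1)/|C|`. -/
def phix {d K m : ℕ} {Xs : Set (Fin d → ℝ)} (Φ : ↥Xs × Fin K → Fin m → ℝ)
    (μ : Fin m → ℝ) (x : ↥Xs) : ℝ :=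
  ⨆ C : {C : Finset (Fin K) // C.Nonempty},
    ((∑ y ∈ C.1, ∑ i, Φ (x, y) i * μ i) - 1) / (C.1.card : ℝ)

/-- The positive parts `(Φ(x,y)ᵀμ − φ(μ,x))₊` sum exactly to one over labels. -/
theorem stmt_15 {d K m : ℕ} (hK : 0 < K)
    (Xs : Set (Fin d → ℝ)) (hXs : MeasurableSet Xs)
    (Φ : ↥Xs × Fin K → Fin m → ℝ) (hΦmeas : ∀ i, Measurable fun z => Φ z i)
    (B : ℝ) (hΦbdd : ∀ z i, |Φ z i| ≤ B) :
    ∀ (μ : Fin m → ℝ) (x : ↥Xs),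
      ∑ y : Fin K, max ((∑ i, Φ (x, y) i * μ i) - phix Φ μ x) 0 = 1 := by
  intro μ x
  set a : Fin K → ℝ := fun y => ∑ i, Φ (x, y) i * μ i with ha
  have hne : Nonempty {C : Finset (Fin K) // C.Nonempty} :=
    ⟨⟨{⟨0, hK⟩}, Finset.singleton_nonempty _⟩⟩
  set g : {C : Finset (Fin K) // C.Nonempty} → ℝ :=
    fun C => ((∑ y ∈ C.1, a y) - 1) / (C.1.card : ℝ) with hg
  obtain ⟨C0, hC0⟩ := Finite.exists_max g
  have hbdd : BddAbove (Set.range g) := Set.Finite.bddAbove (Set.finite_range g)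
  have ht : phix Φ μ x = g C0 := le_antisymm (ciSup_le hC0) (le_ciSup hbdd C0)
  set t := g C0 with htdef
  set n : ℝ := (C0.1.card : ℝ) with hn
  have hnpos : (0:ℝ) < n := by rw [hn]; exact_mod_cast C0.2.card_pos
  have hS : ∑ y ∈ C0.1, a y - 1 = n * t := by
    rw [htdef, hg]; field_simp; rfl
  -- for y in C0, a y ≥ t
  have hin : ∀ y ∈ C0.1, t ≤ a y := by
    intro y hy
    by_contra hlt
    push_neg at hlt
    rcases eq_or_lt_of_le (Nat.one_le_iff_ne_zero.mpr C0.2.card_pos.ne') with h1 | h1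
    · -- card = 1, C0 = {y}
      obtain ⟨z, hz⟩ := Finset.card_eq_one.mp h1.symm
      have hyz : y = z := by rwa [hz, Finset.mem_singleton] at hy
      have : t = a y - 1 := by
        rw [htdef, hg]
        simp [hz, ← hyz]
      linarith
    · -- remove y
      have hne' : (C0.1.erase y).Nonempty := by
        rw [← Finset.card_pos, Finset.card_erase_of_mem hy]
        omega
      have hle := hC0 ⟨C0.1.erase y, hne'⟩
      have hcard : ((C0.1.erase y).card : ℝ) = n - 1 := by
        rw [Finset.card_erase_of_mem hy, hn]
        have := C0.2.card_pos
        push_cast [Nat.cast_sub (by omega : 1 ≤ C0.1.card)]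
        ring
      have hsum : ∑ z ∈ C0.1.erase y, a z = (∑ z ∈ C0.1, a z) - a y := by
        rw [← Finset.add_sum_erase _ _ hy]; ring
      rw [hg] at hle
      simp only at hle
      rw [hsum, hcard] at hle
      have hn1 : (0:ℝ) < n - 1 := by
        have h1' : (1:ℝ) < (C0.1.card : ℝ) := by exact_mod_cast h1
        rw [hn]; linarith
      have h2 := (div_le_iff₀ hn1).mp hle
      nlinarith [hS, h2, hlt]
  -- for y not in C0, a y ≤ t
  have hout : ∀ y : Fin K, y ∉ C0.1 → a y ≤ t := by
    intro y hy
    by_contra hlt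
    push_neg at hlt
    have hle := hC0 ⟨insert y C0.1, Finset.insert_nonempty _ _⟩
    rw [hg] at hle
    simp only at hle
    have hcard : ((insert y C0.1).card : ℝ) = n + 1 := by
      rw [Finset.card_insert_of_notMem hy, hn]; push_cast; ring
    have hsum : ∑ z ∈ insert y C0.1, a z = a y + ∑ z ∈ C0.1, a z :=
      Finset.sum_insert hy
    rw [hsum, hcard] at hle
    have hn1 : (0:ℝ) < n + 1 := by linarith
    have h2 := (div_le_iff₀ hn1).mp hle
    nlinarith [hS, h2, hlt]
  -- compute the sum
  show ∑ y : Fin K, max (a y - phix Φ μ x) 0 = 1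
  calc ∑ y : Fin K, max (a y - phix Φ μ x) 0
      = ∑ y ∈ C0.1, max (a y - t) 0 := by
        rw [ht]
        refine (Finset.sum_subset (Finset.subset_univ _) ?_).symm
        intro y _ hy
        exact max_eq_right (by linarith [hout y hy])
    _ = ∑ y ∈ C0.1, (a y - t) := by
        refine Finset.sum_congr rfl fun y hy => max_eq_left (by linarith [hin y hy])
    _ = (∑ y ∈ C0.1, a y) - n * t := by
        rw [Finset.sum_sub_distrib, Finset.sum_const, nsmul_eq_mul, hn]
    _ = 1 := by linarith [hS]

end
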